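/- Let G be a countable group with a distinguished element g₀ ≠ 1 and positive integer n₀ such that, in G, for every x ∈ G the element [(g₀g₀^x)^{n₀}, (g₀^v g₀^{vx})^{n₀}] = 1 if x ≠ 1, while this equation fails for x = 1 (for some fixed v ∈ G). Then G does not admit a non-discrete Hausdorff group topology. -/

import Mathlib

/-- If in a countable group `G` the equation
`[(g₀ g₀ˣ)^{n₀}, (g₀ᵛ g₀^{vx})^{n₀}] = 1` (in one unknown `x`) holds for every `x ≠ 1`
but fails for `x = 1`, then `G` admits no non-discrete Hausdorff group topology. -/
theorem non_topologizable_of_equation {G : Type*} [Group G] [Countable G]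
    (g₀ : G) (hg₀ : g₀ ≠ 1) (n₀ : ℕ) (hn₀ : 0 < n₀) (v : G)
    (hsol : ∀ x : G, x ≠ 1 →
      ((g₀ * (x⁻¹ * g₀ * x)) ^ n₀)⁻¹ * (((v⁻¹ * g₀ * v) * ((v * x)⁻¹ * g₀ * (v * x))) ^ n₀)⁻¹ *
        ((g₀ * (x⁻¹ * g₀ * x)) ^ n₀) * (((v⁻¹ * g₀ * v) * ((v * x)⁻¹ * g₀ * (v * x))) ^ n₀) = 1)
    (hone : ¬ (((g₀ * (1⁻¹ * g₀ * 1)) ^ n₀)⁻¹ *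
        (((v⁻¹ * g₀ * v) * ((v * 1)⁻¹ * g₀ * (v * 1))) ^ n₀)⁻¹ *
        ((g₀ * (1⁻¹ * g₀ * 1)) ^ n₀) *
        (((v⁻¹ * g₀ * v) * ((v * 1)⁻¹ * g₀ * (v * 1))) ^ n₀) = 1)) :
    ∀ τ : TopologicalSpace G, @IsTopologicalGroup G τ _ → @T2Space G τ →
      @DiscreteTopology G τ := by
  intro τ hτ ht2
  set f : G → G := fun x =>
    ((g₀ * (x⁻¹ * g₀ * x)) ^ n₀)⁻¹ * (((v⁻¹ * g₀ * v) * ((v * x)⁻¹ * g₀ * (v * x))) ^ n₀)⁻¹ *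
      ((g₀ * (x⁻¹ * g₀ * x)) ^ n₀) * (((v⁻¹ * g₀ * v) * ((v * x)⁻¹ * g₀ * (v * x))) ^ n₀)
    with hf
  have hcont : Continuous f := by fun_prop
  have hclosed : IsClosed (f ⁻¹' {1}) :=
    IsClosed.preimage hcont isClosed_singleton
  have heq : (f ⁻¹' {1})ᶜ = ({1} : Set G) := by
    ext x
    simp only [Set.mem_compl_iff, Set.mem_preimage, Set.mem_singleton_iff]
    constructor
    · intro hx
      by_contra hx1
      exact hx (hsol x hx1)
    · rintro rfl
      exact hone
  rw [discreteTopology_iff_isOpen_singleton_one]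
  rw [← heq]
  exact hclosed.isOpen_compl
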